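/- Let Σ be a symmetric positive definite n×n real matrix, T a symmetric n×n real matrix, k_B > 0, and let Ω* be a skew-symmetric matrix satisfying Σ⁻¹ Ω* + Ω* Σ⁻¹ = (k_B/2)(Σ⁻¹ T − T Σ⁻¹). Then Tr(Ω* Σ⁻¹ Ω*ᵀ + k_B Ω* Σ⁻¹ T) = −(k_B/2) Tr(T Σ⁻¹ Ω*); consequently, for any γ > 0 the maximal steady-state power output of the Brownian gyrator equals P* = (k_B/(2γ)) Tr(T Σ⁻¹ Ω*). -/

import Mathlib

open Matrix

/-- For the optimal skew-symmetric coupling `Ω*` solving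
`S⁻¹Ω* + Ω*S⁻¹ = (k_B/2)(S⁻¹T - TS⁻¹)`, one has
`Tr(Ω*S⁻¹Ω*ᵀ + k_B Ω*S⁻¹T) = -(k_B/2) Tr(TS⁻¹Ω*)`; hence the maximal power output is
`P* = (k_B/(2γ)) Tr(TS⁻¹Ω*)`. -/
theorem max_power_formula {n : ℕ} (S T Ω : Matrix (Fin n) (Fin n) ℝ) (k_B : ℝ)
    (hS : S.PosDef) (hT : T.IsHermitian) (hkB : 0 < k_B) (hΩskew : Ωᵀ = -Ω)
    (hΩ : S⁻¹ * Ω + Ω * S⁻¹ = (k_B / 2) • (S⁻¹ * T - T * S⁻¹)) :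
    (Ω * S⁻¹ * Ωᵀ + k_B • (Ω * S⁻¹ * T)).trace = -(k_B / 2) * (T * S⁻¹ * Ω).trace ∧
    (∀ γ : ℝ, 0 < γ →
      -(1 / γ) * (Ω * S⁻¹ * Ωᵀ + k_B • (Ω * S⁻¹ * T)).trace =
        (k_B / (2 * γ)) * (T * S⁻¹ * Ω).trace) := by
  have hSt : Sᵀ = S := by
    have h := hS.isHermitian
    simpa [Matrix.IsHermitian, Matrix.conjTranspose_eq_transpose_of_trivial] using h
  have hTt : Tᵀ = T := by
    simpa [Matrix.IsHermitian, Matrix.conjTranspose_eq_transpose_of_trivial] using hT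
  have hSinv : (S⁻¹)ᵀ = S⁻¹ := by
    rw [Matrix.transpose_nonsing_inv, hSt]
  set a := (Ω * (S⁻¹ * T)).trace with ha
  set x := (Ω * (S⁻¹ * Ω)).trace with hx
  -- (Ω*(T*S⁻¹)).trace = -a
  have hTS : (Ω * (T * S⁻¹)).trace = -a := by
    have := Matrix.trace_transpose (Ω * (T * S⁻¹))
    rw [Matrix.transpose_mul, Matrix.transpose_mul, hSinv, hTt, hΩskew] at this
    rw [← this, ha]
    rw [Matrix.mul_neg, Matrix.trace_neg, Matrix.trace_mul_comm]
  -- (Ω*(Ω*S⁻¹)).trace = x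
  have hOS : (Ω * (Ω * S⁻¹)).trace = x := by
    rw [← mul_assoc, Matrix.trace_mul_comm, ← mul_assoc, Matrix.trace_mul_comm, hx]
  have key := congrArg (fun M => (Ω * M).trace) hΩ
  simp only [mul_add, Matrix.trace_add, Matrix.mul_smul, Matrix.trace_smul, mul_sub,
    Matrix.trace_sub, smul_eq_mul, hOS, hTS, ← ha, ← hx] at key
  -- key : x + x = k_B/2 * (a - -a)
  have hG1 : (Ω * S⁻¹ * Ωᵀ).trace = -x := by
    rw [hΩskew, Matrix.mul_neg, Matrix.trace_neg, mul_assoc, hx]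
  have hG2 : (Ω * S⁻¹ * T).trace = a := by rw [mul_assoc, ha]
  have hG3 : (T * S⁻¹ * Ω).trace = -a := by
    rw [Matrix.trace_mul_comm, hTS]
  constructor
  · rw [Matrix.trace_add, Matrix.trace_smul, hG1, hG2, hG3, smul_eq_mul]
    linarith
  · intro γ hγ
    rw [Matrix.trace_add, Matrix.trace_smul, hG1, hG2, hG3, smul_eq_mul]
    field_simp
    ring_nf
    nlinarith [key]
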